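/- If a flow x hashed to a bucket has sum S(x) strictly greater than half of the bucket's total value count V, then at the end of processing, the candidate key stored in the bucket (via the generalized majority vote algorithm with nonnegative-value updates) equals x. -/

import Mathlib

/-- State of a bucket in MV-Sketch: total value `V`, candidate key `K`,
indicator counter `C`. -/
structure Bucket (α : Type*) where
  V : ℝ
  K : α
  C : ℝ

/-- One update of the generalized majority vote algorithm on input `(y, v)`. -/
noncomputable def Bucket.step {α : Type*} [DecidableEq α] (b : Bucket α) (p : α × ℝ) :
    Bucket α :=
  if p.1 = b.K then ⟨b.V + p.2, b.K, b.C + p.2⟩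
  else if b.C - p.2 < 0 then ⟨b.V + p.2, p.1, p.2 - b.C⟩
  else ⟨b.V + p.2, b.K, b.C - p.2⟩

/-- State of the bucket after processing the whole stream `l`, starting from
an arbitrary initial key `k0`, `V = 0`, `C = 0`. -/
noncomputable def runBucket {α : Type*} [DecidableEq α] (k0 : α) (l : List (α × ℝ)) :
    Bucket α :=
  l.foldl Bucket.step ⟨0, k0, 0⟩

/-- Total value of flow `x` in the stream `l`. -/
def flowSum {α : Type*} [DecidableEq α] (x : α) (l : List (α × ℝ)) : ℝ :=
  ((l.filter fun p => p.1 = x).map Prod.snd).sum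

/-- If a flow `x` has sum strictly greater than half the bucket's total value
count, then at the end of the stream the candidate key stored in the bucket
equals `x`. -/
noncomputable def signed {α : Type*} [DecidableEq α] (x : α) (b : Bucket α) : ℝ :=
  if b.K = x then b.C else -b.C

lemma main_inv {α : Type*} [DecidableEq α] (x : α) :
    ∀ (l : List (α × ℝ)) (b : Bucket α), (∀ p ∈ l, 0 ≤ p.2) → 0 ≤ b.C →
    0 ≤ (l.foldl Bucket.step b).C ∧
    (l.foldl Bucket.step b).V = b.V + (l.map Prod.snd).sum ∧
    signed x b + 2 * flowSum x l - (l.map Prod.snd).sum ≤ signed x (l.foldl Bucket.step b) := by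
  intro l
  induction l with
  | nil => intro b _ hC; simp [flowSum, hC]
  | cons p t ih =>
    intro b hv hC
    have hp : 0 ≤ p.2 := hv p List.mem_cons_self
    have hvt : ∀ q ∈ t, 0 ≤ q.2 := fun q hq => hv q (List.mem_cons_of_mem _ hq)
    have hfs : flowSum x (p :: t) = (if p.1 = x then p.2 else 0) + flowSum x t := by
      simp only [flowSum, List.filter_cons]
      split_ifs with h <;> simp_all
    have hstepC : 0 ≤ (Bucket.step b p).C := by
      unfold Bucket.step
      split_ifs with h1 h2 <;> simp <;> linarith
    obtain ⟨h1, h2, h3⟩ := ih (Bucket.step b p) hvt hstepC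
    refine ⟨by simpa using h1, ?_, ?_⟩
    · have : (Bucket.step b p).V = b.V + p.2 := by
        unfold Bucket.step; split_ifs <;> rfl
      simp only [List.foldl_cons, List.map_cons, List.sum_cons]
      rw [h2, this]; ring
    · simp only [List.foldl_cons, List.map_cons, List.sum_cons]
      have hs : signed x b + (2 * (if p.1 = x then p.2 else 0) - p.2) ≤ signed x (Bucket.step b p) := by
        unfold Bucket.step signed
        split_ifs <;> simp_all <;> linarith
      rw [hfs]
      calc signed x b + 2 * ((if p.1 = x then p.2 else 0) + flowSum x t) - (p.2 + (t.map Prod.snd).sum)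
          = (signed x b + (2 * (if p.1 = x then p.2 else 0) - p.2)) + 2 * flowSum x t - (t.map Prod.snd).sum := by ring
        _ ≤ signed x (Bucket.step b p) + 2 * flowSum x t - (t.map Prod.snd).sum := by linarith
        _ ≤ _ := h3

theorem majority_flow_is_stored {α : Type*} [DecidableEq α] (k0 x : α)
    (l : List (α × ℝ)) (hv : ∀ p ∈ l, 0 ≤ p.2)
    (hmaj : flowSum x l > (runBucket k0 l).V / 2) :
    (runBucket k0 l).K = x := by
  obtain ⟨h1, h2, h3⟩ := main_inv x l ⟨0, k0, 0⟩ hv le_rfl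
  have hb : runBucket k0 l = l.foldl Bucket.step ⟨0, k0, 0⟩ := rfl
  rw [hb] at hmaj ⊢
  by_contra hne
  have : signed x (l.foldl Bucket.step ⟨0, k0, 0⟩) = -(l.foldl Bucket.step ⟨0, k0, 0⟩).C := by
    simp [signed, hne]
  rw [this] at h3
  simp only [signed] at h3
  rw [h2] at hmaj
  simp at h3 hmaj
  linarith
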